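/- arXiv:2602.07730 — 3 statements merged into one kernel-verified Lean document; each statement's English description precedes it below -/
import Mathlib

section
/- Let S be a finite nonempty state space, A a finite nonempty action space, p transition probabilities on S×A with p(s'|s,a) ≥ 0 and Σ_{s'} p(s'|s,a) = 1 for all s,a, and γ ∈ [0,1). Let P : S×S → ℝ be a symmetric row-stochastic matrix and L = I − P its graph Laplacian, with orthonormal eigenbasis e_1,…,e_{|S|} of L ordered by nondecreasing eigenvalues 0 = λ_1 ≤ λ_2 ≤ … ≤ λ_{|S|}. Let r : S → ℝ be a reward function, and for 1 ≤ k ≤ |S| with λ_k > 0 let r_k = Σ_{i=1}^{k} ⟨r, e_i⟩ e_i be its truncated spectral reconstruction. Suppose v* : S → ℝ satisfies the Bellman optimality equation for reward r and v*_k : S → ℝ satisfies the Bellman optimality equation for reward r_k. Then ‖v* − v*_k‖_∞ ≤ ‖r‖_G / ((1−γ)·√λ_k). -/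
private lemma bellman_side {S A : Type*} [Fintype S] [Nonempty S] [Fintype A] [Nonempty A]
    (p : S → A → S → ℝ) (hp_nonneg : ∀ s a s', 0 ≤ p s a s')
    (hp_sum : ∀ s a, ∑ s', p s a s' = 1)
    (γ : ℝ) (r1 r2 v1 v2 : S → ℝ) (C : ℝ)
    (hC : ∀ s', (r1 s' + γ * v1 s') - (r2 s' + γ * v2 s') ≤ C)
    (hv1 : ∀ s, v1 s = Finset.univ.sup' Finset.univ_nonempty
      (fun a => ∑ s', p s a s' * (r1 s' + γ * v1 s')))
    (hv2 : ∀ s, v2 s = Finset.univ.sup' Finset.univ_nonempty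
      (fun a => ∑ s', p s a s' * (r2 s' + γ * v2 s'))) :
    ∀ s, v1 s - v2 s ≤ C := by
  intro s
  rw [hv1 s, hv2 s, sub_le_iff_le_add, add_comm]
  apply Finset.sup'_le
  intro a _
  have h1 : ∑ s', p s a s' * (r1 s' + γ * v1 s')
      ≤ (∑ s', p s a s' * (r2 s' + γ * v2 s')) + C := by
    have : ∑ s', p s a s' * (r1 s' + γ * v1 s')
        - ∑ s', p s a s' * (r2 s' + γ * v2 s')
        = ∑ s', p s a s' * ((r1 s' + γ * v1 s') - (r2 s' + γ * v2 s')) := by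
      rw [← Finset.sum_sub_distrib]; apply Finset.sum_congr rfl; intros; ring
    have h2 : ∑ s', p s a s' * ((r1 s' + γ * v1 s') - (r2 s' + γ * v2 s')) ≤ C := by
      calc ∑ s', p s a s' * ((r1 s' + γ * v1 s') - (r2 s' + γ * v2 s'))
          ≤ ∑ s', p s a s' * C := by
            apply Finset.sum_le_sum; intro s' _
            exact mul_le_mul_of_nonneg_left (hC s') (hp_nonneg s a s')
        _ = C := by rw [← Finset.sum_mul, hp_sum, one_mul]
    linarith [this ▸ h2]
  exact h1.trans (add_le_add_left
    (Finset.le_sup' (fun a => ∑ s', p s a s' * (r2 s' + γ * v2 s')) (Finset.mem_univ a)) C)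


/-- Value approximation error bound: if `v` is an optimal value function for reward `r`
and `vk` an optimal value function for the truncated spectral reconstruction `rk` of `r`
(using the first `k` eigenvectors of the graph Laplacian `L = I - P`), then
`‖v - vk‖_∞ ≤ ‖r‖_G / ((1 - γ) * √(λ_k))`. -/
theorem laplacian_value_approx_bound
    {S A : Type*} [Fintype S] [Nonempty S] [DecidableEq S] [Fintype A] [Nonempty A]
    (p : S → A → S → ℝ)
    (hp_nonneg : ∀ s a s', 0 ≤ p s a s')
    (hp_sum : ∀ s a, ∑ s', p s a s' = 1)
    (γ : ℝ) (hγ0 : 0 ≤ γ) (hγ1 : γ < 1)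
    (P : S → S → ℝ)
    (hP_symm : ∀ i j, P i j = P j i)
    (hP_nonneg : ∀ i j, 0 ≤ P i j)
    (hP_row : ∀ i, ∑ j, P i j = 1)
    -- orthonormal eigenbasis of the graph Laplacian `L = I - P`
    (e : Fin (Fintype.card S) → S → ℝ)
    (lam : Fin (Fintype.card S) → ℝ)
    (h_eigen : ∀ i s, ∑ t, ((if s = t then (1 : ℝ) else 0) - P s t) * e i t = lam i * e i s)
    (h_ortho : ∀ i j, ∑ s, e i s * e j s = if i = j then (1 : ℝ) else 0)
    (h_mono : Monotone lam)
    (h_lam0 : lam ⟨0, Fintype.card_pos⟩ = 0)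
    (r : S → ℝ)
    (k : ℕ) (hk1 : 1 ≤ k) (hk : k ≤ Fintype.card S)
    (hlamk : 0 < lam ⟨k - 1, by omega⟩)
    -- truncated spectral reconstruction of `r` using the first `k` eigenvectors
    (rk : S → ℝ)
    (hrk : ∀ s, rk s = ∑ i ∈ Finset.univ.filter (fun i : Fin (Fintype.card S) => (i : ℕ) < k),
        (∑ t, r t * e i t) * e i s)
    -- Bellman optimality equations
    (v vk : S → ℝ)
    (hv : ∀ s, v s = Finset.univ.sup' Finset.univ_nonempty
      (fun a => ∑ s', p s a s' * (r s' + γ * v s')))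
    (hvk : ∀ s, vk s = Finset.univ.sup' Finset.univ_nonempty
      (fun a => ∑ s', p s a s' * (rk s' + γ * vk s'))) :
    ‖v - vk‖ ≤ Real.sqrt ((1 / 2) * ∑ i, ∑ j, P i j * (r i - r j) ^ 2) /
      ((1 - γ) * Real.sqrt (lam ⟨k - 1, by omega⟩)) := by
  classical
  set lamK := lam ⟨k - 1, by omega⟩ with hlamKdef
  set G2 := (1 / 2 : ℝ) * ∑ i, ∑ j, P i j * (r i - r j) ^ 2 with hG2def
  -- completeness of eigenbasis
  have hcomp : ∀ s t : S, (∑ i, e i s * e i t) = if s = t then (1:ℝ) else 0 := by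
    let σ : Fin (Fintype.card S) ≃ S := (Fintype.equivFin S).symm
    let M : Matrix (Fin (Fintype.card S)) (Fin (Fintype.card S)) ℝ := Matrix.of fun i j => e i (σ j)
    have hMMT : M * M.transpose = 1 := by
      ext i j
      simp only [M, Matrix.mul_apply, Matrix.transpose_apply, Matrix.of_apply,
        Matrix.one_apply]
      rw [Fintype.sum_equiv σ _ (fun s => e i s * e j s) (fun x => rfl), h_ortho i j]
    have hMTM : M.transpose * M = 1 := mul_eq_one_comm.mp hMMT
    intro s t
    have h := congrFun (congrFun hMTM (σ.symm s)) (σ.symm t)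
    simp only [M, Matrix.mul_apply, Matrix.transpose_apply, Matrix.of_apply,
      Matrix.one_apply, Equiv.apply_symm_apply] at h
    rw [h]
    simp [EmbeddingLike.apply_eq_iff_eq]
  set c : Fin (Fintype.card S) → ℝ := fun i => ∑ t, r t * e i t with hcdef
  -- expansion of r
  have hexp' : ∀ s, ∑ i, c i * e i s = r s := by
    intro s
    calc ∑ i, c i * e i s = ∑ i, ∑ t, r t * e i t * e i s := by
          simp only [hcdef, Finset.sum_mul]
      _ = ∑ t, ∑ i, r t * e i t * e i s := Finset.sum_comm
      _ = ∑ t, r t * ∑ i, e i t * e i s := by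
          simp only [Finset.mul_sum]; apply Finset.sum_congr rfl; intros; congr 1
          ext i; ring
      _ = r s := by
          simp only [hcomp]
          simp [Finset.sum_ite_eq']
  have hexp : ∀ s, r s = ∑ i, c i * e i s := fun s => (hexp' s).symm
  -- coefficients of d = r - rk
  set cd : Fin (Fintype.card S) → ℝ := fun i => if (i : ℕ) < k then 0 else c i with hcddef
  have hd : ∀ s, r s - rk s = ∑ i, cd i * e i s := by
    intro s
    rw [hrk s, Finset.sum_filter, hexp s, ← Finset.sum_sub_distrib]
    apply Finset.sum_congr rfl
    intro i _
    by_cases h : (i : ℕ) < k <;> simp [hcddef, hcdef, h]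
  -- Parseval
  have hpar : ∀ (b c' : Fin (Fintype.card S) → ℝ),
      ∑ s, (∑ i, b i * e i s) * (∑ j, c' j * e j s) = ∑ i, b i * c' i := by
    intro b c'
    calc ∑ s, (∑ i, b i * e i s) * (∑ j, c' j * e j s)
        = ∑ s, ∑ i, ∑ j, b i * c' j * (e i s * e j s) := by
          apply Finset.sum_congr rfl; intro s _
          rw [Finset.sum_mul]; apply Finset.sum_congr rfl; intro i _
          rw [Finset.mul_sum]; apply Finset.sum_congr rfl; intro j _; ring
      _ = ∑ i, ∑ j, b i * c' j * ∑ s, e i s * e j s := by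
          rw [Finset.sum_comm]
          apply Finset.sum_congr rfl; intro i _
          rw [Finset.sum_comm]
          apply Finset.sum_congr rfl; intro j _
          rw [Finset.mul_sum]
      _ = ∑ i, b i * c' i := by
          simp only [h_ortho]
          simp [Finset.sum_ite_eq']
  have hnorm2 : ∑ s, (r s - rk s) ^ 2 = ∑ i, cd i ^ 2 := by
    calc ∑ s, (r s - rk s) ^ 2
        = ∑ s, (∑ i, cd i * e i s) * (∑ j, cd j * e j s) := by
          apply Finset.sum_congr rfl; intro s _; rw [hd s]; ring
      _ = ∑ i, cd i * cd i := hpar cd cd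
      _ = ∑ i, cd i ^ 2 := by apply Finset.sum_congr rfl; intros; ring
  -- graph energy = Dirichlet form
  have hG : G2 = ∑ s, r s * (r s - ∑ t, P s t * r t) := by
    have h1 : ∑ i, ∑ j, P i j * r i ^ 2 = ∑ i, r i ^ 2 := by
      apply Finset.sum_congr rfl; intro i _
      rw [← Finset.sum_mul, hP_row, one_mul]
    have h2 : ∑ i : S, ∑ j, P i j * r j ^ 2 = ∑ j, r j ^ 2 := by
      rw [Finset.sum_comm]
      apply Finset.sum_congr rfl; intro j _
      have : ∑ i, P i j = 1 := by
        rw [Finset.sum_congr rfl (fun i _ => hP_symm i j), hP_row]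
      rw [← Finset.sum_mul, this, one_mul]
    have h3 : ∑ s, r s * (r s - ∑ t, P s t * r t)
        = ∑ s, r s ^ 2 - ∑ s, ∑ t, P s t * (r s * r t) := by
      rw [← Finset.sum_sub_distrib]
      apply Finset.sum_congr rfl; intro s _
      rw [mul_sub, Finset.mul_sum]
      congr 1
      · ring
      · apply Finset.sum_congr rfl; intros; ring
    have h4 : ∑ i : S, ∑ j, P i j * (r i - r j) ^ 2
        = (∑ i, ∑ j, P i j * r i ^ 2) - 2 * (∑ i, ∑ j, P i j * (r i * r j))
          + ∑ i : S, ∑ j, P i j * r j ^ 2 := by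
      calc ∑ i : S, ∑ j, P i j * (r i - r j) ^ 2
          = ∑ i : S, ∑ j, (P i j * r i ^ 2 - 2 * (P i j * (r i * r j)) + P i j * r j ^ 2) := by
            apply Finset.sum_congr rfl; intro i _
            apply Finset.sum_congr rfl; intro j _
            ring
        _ = (∑ i, ∑ j, P i j * r i ^ 2) - 2 * (∑ i, ∑ j, P i j * (r i * r j))
              + ∑ i : S, ∑ j, P i j * r j ^ 2 := by
            simp only [Finset.sum_add_distrib, Finset.sum_sub_distrib, ← Finset.mul_sum]
    rw [hG2def, h3, h4, h1, h2]
    ring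
  -- Dirichlet form in spectral terms
  have hLr : ∀ s, r s - ∑ t, P s t * r t
      = ∑ t, ((if s = t then (1:ℝ) else 0) - P s t) * r t := by
    intro s
    have h0 : ∑ t, ((if s = t then (1:ℝ) else 0) - P s t) * r t
        = (∑ t, (if s = t then (1:ℝ) else 0) * r t) - ∑ t, P s t * r t := by
      rw [← Finset.sum_sub_distrib]
      apply Finset.sum_congr rfl; intros; ring
    rw [h0]
    simp [ite_mul, Finset.sum_ite_eq]
  have hspec : ∑ s, r s * (r s - ∑ t, P s t * r t) = ∑ i, lam i * c i ^ 2 := by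
    have key : ∀ j : Fin (Fintype.card S), ∑ s, e j s * (r s - ∑ t, P s t * r t) = lam j * c j := by
      intro j
      calc ∑ s, e j s * (r s - ∑ t, P s t * r t)
          = ∑ s, ∑ t, ((if s = t then (1:ℝ) else 0) - P s t) * r t * e j s := by
            apply Finset.sum_congr rfl; intro s _
            rw [hLr s, Finset.mul_sum]
            apply Finset.sum_congr rfl; intro t _; ring
        _ = ∑ t, ∑ s, ((if t = s then (1:ℝ) else 0) - P t s) * e j s * r t := by
            rw [Finset.sum_comm]
            apply Finset.sum_congr rfl; intro t _
            apply Finset.sum_congr rfl; intro s _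
            rw [hP_symm s t]
            by_cases h : s = t
            · subst h; ring
            · rw [if_neg h, if_neg (Ne.symm h)]; ring
        _ = ∑ t, lam j * e j t * r t := by
            apply Finset.sum_congr rfl; intro t _
            rw [← Finset.sum_mul, h_eigen j t]
        _ = lam j * c j := by
            rw [hcdef, Finset.mul_sum]
            apply Finset.sum_congr rfl; intros; ring
    calc ∑ s, r s * (r s - ∑ t, P s t * r t)
        = ∑ s, ∑ j, c j * (e j s * (r s - ∑ t, P s t * r t)) := by
          apply Finset.sum_congr rfl; intro s _
          rw [hexp s, Finset.sum_mul]
          apply Finset.sum_congr rfl; intros; ring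
      _ = ∑ j, c j * ∑ s, e j s * (r s - ∑ t, P s t * r t) := by
          rw [Finset.sum_comm]
          apply Finset.sum_congr rfl; intro j _
          rw [Finset.mul_sum]
      _ = ∑ i, lam i * c i ^ 2 := by
          apply Finset.sum_congr rfl; intro j _
          rw [key j]; ring
  have hlam_nonneg : ∀ i : Fin (Fintype.card S), 0 ≤ lam i := by
    intro i
    rw [← h_lam0]
    exact h_mono (by simp [Fin.le_def])
  -- spectral tail bound
  have htail : lamK * ∑ s, (r s - rk s) ^ 2 ≤ G2 := by
    rw [hG, hspec, hnorm2, Finset.mul_sum]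
    apply Finset.sum_le_sum
    intro i _
    by_cases h : (i : ℕ) < k
    · simp only [hcddef, if_pos h]
      nlinarith [hlam_nonneg i, sq_nonneg (c i)]
    · simp only [hcddef, if_neg h]
      have hle : lamK ≤ lam i := h_mono (by simp [Fin.le_def]; omega)
      have := sq_nonneg (c i)
      nlinarith
  have hG2nonneg : 0 ≤ G2 := by
    rw [hG2def]
    have : 0 ≤ ∑ i, ∑ j, P i j * (r i - r j) ^ 2 := by
      apply Finset.sum_nonneg; intro i _
      apply Finset.sum_nonneg; intro j _
      exact mul_nonneg (hP_nonneg i j) (sq_nonneg _)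
    linarith
  -- sup norm of r - rk bounded by L2 norm
  have hDle : ‖r - rk‖ ≤ Real.sqrt G2 / Real.sqrt lamK := by
    have hsum_nonneg : (0:ℝ) ≤ ∑ s, (r s - rk s) ^ 2 :=
      Finset.sum_nonneg fun s _ => sq_nonneg _
    have h1 : ‖r - rk‖ ≤ Real.sqrt (∑ s, (r s - rk s) ^ 2) := by
      apply (pi_norm_le_iff_of_nonneg (Real.sqrt_nonneg _)).mpr
      intro s
      rw [Pi.sub_apply, Real.norm_eq_abs, ← Real.sqrt_sq_eq_abs]
      apply Real.sqrt_le_sqrt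
      exact Finset.single_le_sum (f := fun s => (r s - rk s) ^ 2)
        (fun s _ => sq_nonneg _) (Finset.mem_univ s)
    have h2 : ∑ s, (r s - rk s) ^ 2 ≤ G2 / lamK := by
      rw [le_div_iff₀ hlamk]
      linarith [htail]
    calc ‖r - rk‖ ≤ Real.sqrt (∑ s, (r s - rk s) ^ 2) := h1
      _ ≤ Real.sqrt (G2 / lamK) := Real.sqrt_le_sqrt h2
      _ = Real.sqrt G2 / Real.sqrt lamK := Real.sqrt_div hG2nonneg _
  -- Bellman contraction
  have hcontr : (1 - γ) * ‖v - vk‖ ≤ ‖r - rk‖ := by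
    set N := ‖v - vk‖ with hN
    set D := ‖r - rk‖ with hD
    have hCbound : ∀ (r1 r2 v1 v2 : S → ℝ), r1 - r2 = r - rk ∨ r1 - r2 = rk - r →
        True := fun _ _ _ _ _ => trivial
    have hC1 : ∀ s', (r s' + γ * v s') - (rk s' + γ * vk s') ≤ D + γ * N := by
      intro s'
      have h1 : r s' - rk s' ≤ D := by
        have := norm_le_pi_norm (r - rk) s'
        rw [Pi.sub_apply, Real.norm_eq_abs] at this
        linarith [le_abs_self (r s' - rk s')]
      have h2 : v s' - vk s' ≤ N := by
        have := norm_le_pi_norm (v - vk) s'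
        rw [Pi.sub_apply, Real.norm_eq_abs] at this
        linarith [le_abs_self (v s' - vk s')]
      nlinarith
    have hC2 : ∀ s', (rk s' + γ * vk s') - (r s' + γ * v s') ≤ D + γ * N := by
      intro s'
      have h1 : rk s' - r s' ≤ D := by
        have := norm_le_pi_norm (r - rk) s'
        rw [Pi.sub_apply, Real.norm_eq_abs] at this
        linarith [neg_abs_le (r s' - rk s')]
      have h2 : vk s' - v s' ≤ N := by
        have := norm_le_pi_norm (v - vk) s'
        rw [Pi.sub_apply, Real.norm_eq_abs] at this
        linarith [neg_abs_le (v s' - vk s')]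
      nlinarith
    have hside1 := bellman_side p hp_nonneg hp_sum γ r rk v vk (D + γ * N) hC1 hv hvk
    have hside2 := bellman_side p hp_nonneg hp_sum γ rk r vk v (D + γ * N) hC2 hvk hv
    have hNle : N ≤ D + γ * N := by
      rw [hN]
      apply (pi_norm_le_iff_of_nonneg ?_).mpr
      · intro s
        rw [Pi.sub_apply, Real.norm_eq_abs, abs_sub_le_iff]
        exact ⟨hside1 s, hside2 s⟩
      · have : (0:ℝ) ≤ D := norm_nonneg _
        have : (0:ℝ) ≤ N := norm_nonneg _
        nlinarith
    nlinarith
  -- assemble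
  have h1γ : (0:ℝ) < 1 - γ := by linarith
  have hfinal : ‖v - vk‖ ≤ (Real.sqrt G2 / Real.sqrt lamK) / (1 - γ) := by
    rw [le_div_iff₀ h1γ]
    calc ‖v - vk‖ * (1 - γ) = (1 - γ) * ‖v - vk‖ := by ring
      _ ≤ ‖r - rk‖ := hcontr
      _ ≤ Real.sqrt G2 / Real.sqrt lamK := hDle
  calc ‖v - vk‖ ≤ (Real.sqrt G2 / Real.sqrt lamK) / (1 - γ) := hfinal
    _ = Real.sqrt G2 / ((1 - γ) * Real.sqrt lamK) := by
        rw [div_div, mul_comm]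
end

section
/- Let L be a symmetric positive semidefinite n×n real matrix with orthonormal eigenbasis e_1,…,e_n ordered by nondecreasing eigenvalues λ_1 ≤ … ≤ λ_n, let f ∈ ℝ^n, and for 1 ≤ k ≤ n with λ_k > 0 let f_k = Σ_{i=1}^{k} ⟨f, e_i⟩ e_i be the truncated spectral reconstruction. Then ‖f − f_k‖_∞ ≤ √(⟨f, L f⟩) / √λ_k. -/
/-- Column orthonormality from row orthonormality for a square matrix. -/
lemma col_ortho_aux {n : ℕ} (e : Fin n → Fin n → ℝ)
    (h : ∀ i j, ∑ s, e i s * e j s = if i = j then (1 : ℝ) else 0) :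
    ∀ s t, ∑ i, e i s * e i t = if s = t then (1 : ℝ) else 0 := by
  have hE : (Matrix.of e) * Matrix.transpose (Matrix.of e) = 1 := by
    ext i j
    simpa [Matrix.mul_apply, Matrix.one_apply] using h i j
  have hE' := mul_eq_one_comm.mp hE
  intro s t
  have := congrFun (congrFun hE' s) t
  simpa [Matrix.mul_apply, Matrix.one_apply] using this

/-- Sup-norm reconstruction bound: for a symmetric PSD matrix `L` with orthonormal
eigenbasis `e` ordered by nondecreasing eigenvalues `lam`, the truncated spectral
reconstruction `f_k = ∑_{i=1}^{k} ⟨f, e_i⟩ e_i` satisfies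
`‖f - f_k‖_∞ ≤ √(⟨f, L f⟩) / √(λ_k)` whenever `λ_k > 0`. -/
theorem truncated_reconstruction_sup_bound
    {n : ℕ} (L : Fin n → Fin n → ℝ)
    (hL_symm : ∀ i j, L i j = L j i)
    (hL_psd : ∀ f : Fin n → ℝ, 0 ≤ ∑ i, f i * ∑ j, L i j * f j)
    (e : Fin n → Fin n → ℝ) (lam : Fin n → ℝ)
    (h_eigen : ∀ i s, ∑ t, L s t * e i t = lam i * e i s)
    (h_ortho : ∀ i j, ∑ s, e i s * e j s = if i = j then (1 : ℝ) else 0)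
    (h_mono : Monotone lam)
    (f : Fin n → ℝ)
    (k : ℕ) (hk1 : 1 ≤ k) (hk : k ≤ n)
    (hlamk : 0 < lam ⟨k - 1, by omega⟩)
    (fk : Fin n → ℝ)
    (hfk : ∀ s, fk s = ∑ i ∈ Finset.univ.filter (fun i : Fin n => (i : ℕ) < k),
        (∑ t, f t * e i t) * e i s) :
    ‖f - fk‖ ≤ Real.sqrt (∑ i, f i * ∑ j, L i j * f j) /
      Real.sqrt (lam ⟨k - 1, by omega⟩) := by
  set m : Fin n := ⟨k - 1, by omega⟩ with hm
  set c : Fin n → ℝ := fun i => ∑ t, f t * e i t with hc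
  set Q : ℝ := ∑ i, f i * ∑ j, L i j * f j with hQdef
  have hcol := col_ortho_aux e h_ortho
  -- f expands in the basis
  have hf : ∀ s, f s = ∑ i, c i * e i s := by
    intro s
    have h1 : ∑ i, c i * e i s = ∑ i, ∑ t, f t * e i t * e i s := by
      simp [hc, Finset.sum_mul]
    rw [h1, Finset.sum_comm]
    have h2 : ∀ t, ∑ i, f t * e i t * e i s = f t * ∑ i, e i t * e i s := by
      intro t; rw [Finset.mul_sum]; exact Finset.sum_congr rfl fun i _ => by ring
    simp only [h2, hcol]
    simp
  -- quadratic form in eigencoordinates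
  have hQ : Q = ∑ i, lam i * (c i) ^ 2 := by
    have hLf : ∀ s, ∑ t, L s t * f t = ∑ i, c i * (lam i * e i s) := by
      intro s
      calc ∑ t, L s t * f t = ∑ t, L s t * ∑ i, c i * e i t := by
            simp only [← hf]
        _ = ∑ t, ∑ i, c i * (L s t * e i t) := by
            exact Finset.sum_congr rfl fun t _ => by
              rw [Finset.mul_sum]; exact Finset.sum_congr rfl fun i _ => by ring
        _ = ∑ i, ∑ t, c i * (L s t * e i t) := Finset.sum_comm
        _ = ∑ i, c i * ∑ t, L s t * e i t := by
            exact Finset.sum_congr rfl fun i _ => by rw [Finset.mul_sum]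
        _ = ∑ i, c i * (lam i * e i s) := by simp [h_eigen]
    calc Q = ∑ s, f s * ∑ i, c i * (lam i * e i s) := by
          simp only [hQdef, hLf]
      _ = ∑ s, ∑ i, f s * (c i * (lam i * e i s)) := by
          exact Finset.sum_congr rfl fun s _ => by rw [Finset.mul_sum]
      _ = ∑ i, ∑ s, f s * (c i * (lam i * e i s)) := Finset.sum_comm
      _ = ∑ i, lam i * c i * ∑ s, f s * e i s := by
          refine Finset.sum_congr rfl fun i _ => ?_
          rw [Finset.mul_sum]; exact Finset.sum_congr rfl fun s _ => by ring
      _ = ∑ i, lam i * (c i) ^ 2 := by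
          refine Finset.sum_congr rfl fun i _ => ?_
          have : ∑ s, f s * e i s = c i := rfl
          rw [this]; ring
  -- eigenvalues are nonnegative
  have hlam_nonneg : ∀ i, 0 ≤ lam i := by
    intro i
    have h0 := hL_psd (e i)
    have : ∑ s, e i s * ∑ t, L s t * e i t = lam i := by
      simp only [h_eigen]
      have : ∑ s, e i s * (lam i * e i s) = lam i * ∑ s, e i s * e i s := by
        rw [Finset.mul_sum]; refine Finset.sum_congr rfl fun s _ => ?_; ring
      rw [this, h_ortho i i]; simp
    rwa [this] at h0
  set S : Finset (Fin n) := Finset.univ.filter (fun i : Fin n => ¬ (i : ℕ) < k) with hS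
  -- tail coefficient bound
  have htail : ∑ i ∈ S, (c i) ^ 2 ≤ Q / lam m := by
    rw [le_div_iff₀ hlamk]
    have h1 : (∑ i ∈ S, (c i) ^ 2) * lam m = ∑ i ∈ S, lam m * (c i) ^ 2 := by
      rw [Finset.sum_mul]; refine Finset.sum_congr rfl fun i _ => ?_; ring
    rw [h1, hQ]
    refine le_trans (Finset.sum_le_sum fun i hi => ?_)
      (Finset.sum_le_sum_of_subset_of_nonneg (Finset.subset_univ S)
        fun i _ _ => mul_nonneg (hlam_nonneg i) (sq_nonneg _))
    have hik : ¬ (i : ℕ) < k := (Finset.mem_filter.mp hi).2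
    have hmi : m ≤ i := by
      have : (m : ℕ) ≤ (i : ℕ) := by simp only [hm]; omega
      exact this
    exact mul_le_mul_of_nonneg_right (h_mono hmi) (sq_nonneg _)
  have hQ0 : 0 ≤ Q := hL_psd f
  have hrhs : (0:ℝ) ≤ Real.sqrt Q / Real.sqrt (lam m) :=
    div_nonneg (Real.sqrt_nonneg _) (Real.sqrt_nonneg _)
  rw [pi_norm_le_iff_of_nonneg hrhs]
  intro s
  have hdiff : (f - fk) s = ∑ i ∈ S, c i * e i s := by
    have hsplit := Finset.sum_filter_add_sum_filter_not Finset.univ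
      (fun i : Fin n => (i : ℕ) < k) (fun i => c i * e i s)
    have h2 : f s = fk s + ∑ i ∈ S, c i * e i s := by
      rw [hf s, hfk s, ← hsplit]
    simp only [Pi.sub_apply, h2]; ring
  rw [Real.norm_eq_abs, hdiff]
  have hsq : (∑ i ∈ S, c i * e i s) ^ 2 ≤ (∑ i ∈ S, (c i) ^ 2) * ∑ i ∈ S, (e i s) ^ 2 :=
    Finset.sum_mul_sq_le_sq_mul_sq S _ _
  have hes : ∑ i ∈ S, (e i s) ^ 2 ≤ 1 := by
    have h1 : ∑ i, (e i s) ^ 2 = 1 := by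
      have := hcol s s
      simpa [sq] using this
    rw [← h1]
    exact Finset.sum_le_sum_of_subset_of_nonneg (Finset.subset_univ S)
      fun i _ _ => sq_nonneg _
  have hc2 : (0:ℝ) ≤ ∑ i ∈ S, (c i) ^ 2 := Finset.sum_nonneg fun i _ => sq_nonneg _
  have hbound : (∑ i ∈ S, c i * e i s) ^ 2 ≤ Q / lam m := by
    calc (∑ i ∈ S, c i * e i s) ^ 2
        ≤ (∑ i ∈ S, (c i) ^ 2) * ∑ i ∈ S, (e i s) ^ 2 := hsq
      _ ≤ (∑ i ∈ S, (c i) ^ 2) * 1 := mul_le_mul_of_nonneg_left hes hc2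
      _ = ∑ i ∈ S, (c i) ^ 2 := mul_one _
      _ ≤ Q / lam m := htail
  calc |∑ i ∈ S, c i * e i s| ≤ Real.sqrt (Q / lam m) := Real.abs_le_sqrt hbound
    _ = Real.sqrt Q / Real.sqrt (lam m) := Real.sqrt_div hQ0 _
end

section
/- Let S be a finite nonempty state space, A a finite nonempty action space, p transition probabilities on S×A with p(s'|s,a) ≥ 0 and Σ_{s'} p(s'|s,a) = 1 for all s,a, γ ∈ [0,1), π : S → A a deterministic policy, and φ : S → ℝ^d a feature map. Suppose ψ : S×A → ℝ^d satisfies the successor-feature Bellman equation ψ(s,a) = Σ_{s'} p(s'|s,a)·(φ(s') + γ·ψ(s', π(s'))) for all (s,a), and for a weight vector w ∈ ℝ^d suppose q : S×A → ℝ satisfies the policy-evaluation Bellman equation q(s,a) = Σ_{s'} p(s'|s,a)·(r_w(s') + γ·q(s', π(s'))) for all (s,a), where r_w(s') = ⟨w, φ(s')⟩. Then q(s,a) = ⟨w, ψ(s,a)⟩ for all (s,a) ∈ S×A. -/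
/-- Successor features and policy evaluation: if `ψ` satisfies the successor-feature
Bellman equation for policy `pol` and feature map `φ`, and `q` satisfies the
policy-evaluation Bellman equation for the linear reward `r_w(s) = ⟨w, φ(s)⟩`, then
`q(s, a) = ⟨w, ψ(s, a)⟩` for all `(s, a)`. -/
theorem successor_features_linear_value
    {S A : Type*} [Fintype S] [Nonempty S] [Fintype A] [Nonempty A]
    (p : S → A → S → ℝ)
    (hp_nonneg : ∀ s a s', 0 ≤ p s a s')
    (hp_sum : ∀ s a, ∑ s', p s a s' = 1)
    (γ : ℝ) (hγ0 : 0 ≤ γ) (hγ1 : γ < 1)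
    {d : ℕ}
    (pol : S → A) (φ : S → Fin d → ℝ)
    (ψ : S → A → Fin d → ℝ)
    (hψ : ∀ s a j, ψ s a j = ∑ s', p s a s' * (φ s' j + γ * ψ s' (pol s') j))
    (w : Fin d → ℝ) (q : S → A → ℝ)
    (hq : ∀ s a, q s a = ∑ s', p s a s' * ((∑ j, w j * φ s' j) + γ * q s' (pol s'))) :
    ∀ s a, q s a = ∑ j, w j * ψ s a j := by
  set g : S × A → ℝ := fun x => q x.1 x.2 - ∑ j, w j * ψ x.1 x.2 j with hg
  have key : ∀ s a, g (s, a) = γ * ∑ s', p s a s' * g (s', pol s') := by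
    intro s a
    have h1 : ∑ j, w j * ψ s a j
        = ∑ s', p s a s' * ((∑ j, w j * φ s' j) + γ * ∑ j, w j * ψ s' (pol s') j) := by
      calc ∑ j, w j * ψ s a j
          = ∑ j, ∑ s', w j * (p s a s' * (φ s' j + γ * ψ s' (pol s') j)) := by
            refine Finset.sum_congr rfl fun j _ => ?_
            rw [hψ s a j, Finset.mul_sum]
        _ = ∑ s', ∑ j, w j * (p s a s' * (φ s' j + γ * ψ s' (pol s') j)) :=
            Finset.sum_comm
        _ = ∑ s', p s a s' * ((∑ j, w j * φ s' j) + γ * ∑ j, w j * ψ s' (pol s') j) := by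
            refine Finset.sum_congr rfl fun s' _ => ?_
            simp only [Finset.mul_sum, ← Finset.sum_add_distrib]
            refine Finset.sum_congr rfl fun j _ => ?_
            ring
    simp only [hg]
    rw [hq s a, h1, ← Finset.sum_sub_distrib, Finset.mul_sum]
    refine Finset.sum_congr rfl fun s' _ => ?_
    ring
  have habs : ∀ x : S × A, |g x| ≤ γ * |g x| := by
    intro x
    obtain ⟨x0, _, hx0⟩ := Finset.exists_max_image Finset.univ (fun x : S × A => |g x|)
      ⟨(Classical.arbitrary S, Classical.arbitrary A), Finset.mem_univ _⟩
    have hmax : ∀ y : S × A, |g y| ≤ |g x0| := fun y => hx0 y (Finset.mem_univ y)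
    have h0 : |g x0| ≤ γ * |g x0| := by
      calc |g x0| = |γ * ∑ s', p x0.1 x0.2 s' * g (s', pol s')| := by
            rw [← key x0.1 x0.2]
        _ = γ * |∑ s', p x0.1 x0.2 s' * g (s', pol s')| := by
            rw [abs_mul, abs_of_nonneg hγ0]
        _ ≤ γ * ∑ s', |p x0.1 x0.2 s' * g (s', pol s')| := by
            gcongr; exact Finset.abs_sum_le_sum_abs _ _
        _ ≤ γ * ∑ s', p x0.1 x0.2 s' * |g x0| := by
            gcongr with s' _
            rw [abs_mul, abs_of_nonneg (hp_nonneg _ _ _)]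
            exact mul_le_mul_of_nonneg_left (hmax _) (hp_nonneg _ _ _)
        _ = γ * |g x0| := by rw [← Finset.sum_mul, hp_sum, one_mul]
    have hx0zero : |g x0| ≤ 0 := by nlinarith
    calc |g x| ≤ |g x0| := hmax x
      _ ≤ 0 := hx0zero
      _ ≤ γ * |g x| := by positivity
  intro s a
  have h := habs (s, a)
  have : |g (s, a)| = 0 := le_antisymm (by nlinarith [abs_nonneg (g (s, a))]) (abs_nonneg _)
  have := abs_eq_zero.mp this
  simp only [hg] at this
  linarith
end
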